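/- Let (gₑ) be a bounded family in L¹(K) (K ⊂ ℝ^d × ℝ^d compact) that is equiintegrable in v, and suppose that for every nonnegative Ψ ∈ C¹_c(ℝ^d) the family of functions x ↦ ∫ |gₑ(x,v)| Ψ(v) dv is equiintegrable in x. Then (gₑ) is equiintegrable jointly in (x,v): for every η > 0 there is α > 0 such that for any measurable B ⊂ ℝ^{2d} with |B| < α, ∫_B |gₑ| dx dv ≤ η for all ε. -/

import Mathlib

open MeasureTheory
open scoped ENNReal NNReal

/-- If a family `(gₑ)`, bounded in `L¹` and supported in a fixed compact set
`K ⊂ ℝ^d × ℝ^d`, is equiintegrable in `v`, and if for every nonnegative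
`Ψ ∈ C¹_c` the moments `x ↦ ∫ |gₑ(x,v)| Ψ(v) dv` are equiintegrable in `x`,
then `(gₑ)` is equiintegrable jointly in `(x,v)`. -/
theorem equiintegrable_v_and_moments_implies_xv (d : ℕ) (hd : 1 ≤ d)
    {ι : Type*}
    (g : ι → EuclideanSpace ℝ (Fin d) × EuclideanSpace ℝ (Fin d) → ℝ)
    (K : Set (EuclideanSpace ℝ (Fin d) × EuclideanSpace ℝ (Fin d)))
    (hK : IsCompact K)
    (hgm : ∀ e, Measurable (g e))
    (hsupp : ∀ e, Function.support (g e) ⊆ K)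
    (hbdd : ∃ C : ℝ, ∀ e, ∫⁻ y, (‖g e y‖₊ : ℝ≥0∞) ≤ ENNReal.ofReal C)
    (hequiv : ∀ η : ℝ, 0 < η → ∃ α₁ : ℝ, 0 < α₁ ∧
      ∀ A : EuclideanSpace ℝ (Fin d) → Set (EuclideanSpace ℝ (Fin d)),
        (∀ x, MeasurableSet (A x)) → (∀ x, volume (A x) < ENNReal.ofReal α₁) →
        ∀ e, ∫⁻ x, ∫⁻ v in A x, (‖g e (x, v)‖₊ : ℝ≥0∞) ≤ ENNReal.ofReal η)
    (hmom : ∀ Ψ : EuclideanSpace ℝ (Fin d) → ℝ,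
      ContDiff ℝ 1 Ψ → HasCompactSupport Ψ → (∀ v, 0 ≤ Ψ v) →
      ∀ η : ℝ, 0 < η → ∃ α₂ : ℝ, 0 < α₂ ∧
        ∀ A : Set (EuclideanSpace ℝ (Fin d)), MeasurableSet A →
          volume A < ENNReal.ofReal α₂ →
          ∀ e, ∫⁻ x in A, ∫⁻ v, (‖g e (x, v)‖₊ : ℝ≥0∞) * ENNReal.ofReal (Ψ v)
            ≤ ENNReal.ofReal η) :
    ∀ η : ℝ, 0 < η → ∃ α : ℝ, 0 < α ∧
      ∀ B : Set (EuclideanSpace ℝ (Fin d) × EuclideanSpace ℝ (Fin d)),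
        MeasurableSet B → volume B < ENNReal.ofReal α →
        ∀ e, ∫⁻ y in B, (‖g e y‖₊ : ℝ≥0∞) ≤ ENNReal.ofReal η := by
  classical
  intro η hη
  obtain ⟨α₁, hα₁, hP₁⟩ := hequiv (η / 2) (by positivity)
  -- a bump function equal to 1 on the v-projection of K
  obtain ⟨R, hR⟩ := ((hK.image continuous_snd).isBounded).subset_closedBall 0
  set f : ContDiffBump (0 : EuclideanSpace ℝ (Fin d)) :=
    ⟨|R| + 1, |R| + 2, by positivity, by linarith⟩ with hf
  have hΨ1 : ∀ v ∈ Prod.snd '' K, f v = 1 := by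
    intro v hv
    apply f.one_of_mem_closedBall
    have h1 := hR hv
    simp only [Metric.mem_closedBall] at h1 ⊢
    have : R ≤ |R| + 1 := by
      have := le_abs_self R; linarith
    calc dist v 0 ≤ R := h1
      _ ≤ |R| + 1 := this
  obtain ⟨α₂, hα₂, hP₂⟩ := hmom f f.contDiff f.hasCompactSupport
    (fun v => f.nonneg) (η / 2) (by positivity)
  refine ⟨α₁ * α₂, by positivity, ?_⟩
  intro B hB hBvol e
  have hgem : Measurable fun y => (‖g e y‖₊ : ℝ≥0∞) :=
    (hgm e).nnnorm.coe_nnreal_ennreal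
  set F : EuclideanSpace ℝ (Fin d) → ℝ≥0∞ :=
    fun x => ∫⁻ v in Prod.mk x ⁻¹' B, (‖g e (x, v)‖₊ : ℝ≥0∞) with hF
  have hslice : ∀ x, MeasurableSet (Prod.mk x ⁻¹' B) :=
    fun x => hB.preimage measurable_prodMk_left
  have hmeas_slice : Measurable fun x => volume (Prod.mk x ⁻¹' B) :=
    measurable_measure_prodMk_left hB
  set E : Set (EuclideanSpace ℝ (Fin d)) :=
    {x | volume (Prod.mk x ⁻¹' B) < ENNReal.ofReal α₁} with hEdef
  have hE : MeasurableSet E := hmeas_slice measurableSet_Iio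
  -- Fubini
  have key : ∫⁻ y in B, (‖g e y‖₊ : ℝ≥0∞) = ∫⁻ x, F x := by
    rw [← lintegral_indicator hB, Measure.volume_eq_prod,
      lintegral_prod _ ((hgem.indicator hB).aemeasurable)]
    refine lintegral_congr fun x => ?_
    simp only [hF]
    rw [← lintegral_indicator (hslice x)]
    refine lintegral_congr fun v => ?_
    by_cases h : (x, v) ∈ B <;>
      simp [Set.indicator, h, Set.mem_preimage]
  -- Chebyshev : volume Eᶜ < α₂
  have hcheb : volume Eᶜ < ENNReal.ofReal α₂ := by
    have h1 : ENNReal.ofReal α₁ * volume Eᶜ ≤ volume B := by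
      have hEc : Eᶜ = {x | ENNReal.ofReal α₁ ≤ volume (Prod.mk x ⁻¹' B)} := by
        ext x; simp [hEdef, not_lt]
      rw [hEc]
      calc ENNReal.ofReal α₁ *
            volume {x | ENNReal.ofReal α₁ ≤ volume (Prod.mk x ⁻¹' B)}
          ≤ ∫⁻ x, volume (Prod.mk x ⁻¹' B) :=
            mul_meas_ge_le_lintegral₀ hmeas_slice.aemeasurable _
        _ = volume B := by
            rw [Measure.volume_eq_prod, Measure.prod_apply hB]
    have h2 : ENNReal.ofReal α₁ * volume Eᶜ <
        ENNReal.ofReal α₁ * ENNReal.ofReal α₂ := by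
      refine lt_of_le_of_lt h1 ?_
      rw [← ENNReal.ofReal_mul hα₁.le]
      exact hBvol
    exact lt_of_mul_lt_mul_left h2 (zero_le)
  -- split
  have hsplit : ∫⁻ x, F x = (∫⁻ x in E, F x) + ∫⁻ x in Eᶜ, F x :=
    (lintegral_add_compl F hE).symm
  -- term on E
  have hterm1 : ∫⁻ x in E, F x ≤ ENNReal.ofReal (η / 2) := by
    set A : EuclideanSpace ℝ (Fin d) → Set (EuclideanSpace ℝ (Fin d)) :=
      fun x => if x ∈ E then Prod.mk x ⁻¹' B else ∅ with hA
    have hAm : ∀ x, MeasurableSet (A x) := by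
      intro x; rw [hA]; dsimp only
      split
      · exact hslice x
      · exact MeasurableSet.empty
    have hAv : ∀ x, volume (A x) < ENNReal.ofReal α₁ := by
      intro x; rw [hA]; dsimp only
      split
      · exact ‹x ∈ E›
      · simpa using ENNReal.ofReal_pos.mpr hα₁
    have heq : ∫⁻ x in E, F x =
        ∫⁻ x, ∫⁻ v in A x, (‖g e (x, v)‖₊ : ℝ≥0∞) := by
      rw [← lintegral_indicator hE]
      refine lintegral_congr fun x => ?_
      by_cases h : x ∈ E <;> simp [Set.indicator, h, hA, hF]
    rw [heq]
    exact hP₁ A hAm hAv e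
  -- term on Eᶜ
  have hterm2 : ∫⁻ x in Eᶜ, F x ≤ ENNReal.ofReal (η / 2) := by
    refine le_trans ?_ (hP₂ Eᶜ hE.compl hcheb e)
    refine lintegral_mono fun x => ?_
    refine le_trans (setLIntegral_le_lintegral _ _) ?_
    refine lintegral_mono fun v => ?_
    by_cases h : g e (x, v) = 0
    · simp [h]
    · have hvK : v ∈ Prod.snd '' K := ⟨(x, v), hsupp e h, rfl⟩
      rw [hΨ1 v hvK]
      simp
  calc ∫⁻ y in B, (‖g e y‖₊ : ℝ≥0∞) = ∫⁻ x, F x := key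
    _ = (∫⁻ x in E, F x) + ∫⁻ x in Eᶜ, F x := hsplit
    _ ≤ ENNReal.ofReal (η / 2) + ENNReal.ofReal (η / 2) :=
        add_le_add hterm1 hterm2
    _ = ENNReal.ofReal η := by
        rw [← ENNReal.ofReal_add (by positivity) (by positivity)]
        norm_num
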